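/- arXiv:2107.09494 — 3 statements merged into one kernel-verified Lean document; each statement's English description precedes it below -/
import Mathlib

section
/- Let P be a finite p-group with a chain of subgroups 1 = P₀ ≤ P₁ ≤ ⋯ ≤ P_k = P, all normal in P. Let Γ ≤ Aut(P) be a subgroup of automorphisms normalizing each P_i. If α ∈ Γ satisfies x⁻¹α(x) ∈ P_{i-1} for each 1 ≤ i ≤ k and each x ∈ P_i, then α lies in O_p(Γ), the largest normal p-subgroup of Γ. -/
section Aux

variable {P : Type*} [Group P] {k : ℕ}

/-- The chain-stabilization predicate. -/
def StabChain (C : Fin (k + 1) → Subgroup P) (β : MulAut P) : Prop :=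
  ∀ i : Fin k, ∀ x ∈ C i.succ, x⁻¹ * β x ∈ C i.castSucc

lemma stabChain_one (C : Fin (k + 1) → Subgroup P) : StabChain C 1 := by
  intro i x hx
  simpa using (C i.castSucc).one_mem

lemma stabChain_mapsTo {C : Fin (k + 1) → Subgroup P} (hC0 : C 0 = ⊥)
    (hmono : Monotone C) {β : MulAut P} (hβ : StabChain C β) :
    ∀ j : Fin (k + 1), ∀ x ∈ C j, β x ∈ C j := by
  intro j
  induction j using Fin.cases with
  | zero =>
    intro x hx
    rw [hC0] at hx ⊢
    simp only [Subgroup.mem_bot] at hx ⊢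
    simp [hx]
  | succ i =>
    intro x hx
    have h1 : x⁻¹ * β x ∈ C i.succ := hmono (Fin.castSucc_le_succ i) (hβ i x hx)
    have : β x = x * (x⁻¹ * β x) := by group
    rw [this]
    exact mul_mem hx h1

lemma stabChain_mul {C : Fin (k + 1) → Subgroup P} (hC0 : C 0 = ⊥)
    (hmono : Monotone C) {β γ : MulAut P} (hβ : StabChain C β) (hγ : StabChain C γ) :
    StabChain C (β * γ) := by
  intro i x hx
  have hγx : γ x ∈ C i.succ := stabChain_mapsTo hC0 hmono hγ _ x hx
  have h1 : x⁻¹ * γ x ∈ C i.castSucc := hγ i x hx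
  have h2 : (γ x)⁻¹ * β (γ x) ∈ C i.castSucc := hβ i (γ x) hγx
  have : x⁻¹ * (β * γ) x = (x⁻¹ * γ x) * ((γ x)⁻¹ * β (γ x)) := by
    rw [MulAut.mul_apply]; group
  rw [this]
  exact mul_mem h1 h2

lemma stabChain_pow {C : Fin (k + 1) → Subgroup P} (hC0 : C 0 = ⊥)
    (hmono : Monotone C) {β : MulAut P} (hβ : StabChain C β) :
    ∀ n : ℕ, StabChain C (β ^ n) := by
  intro n
  induction n with
  | zero => simpa using stabChain_one C
  | succ m ih =>
    rw [pow_succ]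
    exact stabChain_mul hC0 hmono ih hβ

lemma stabChain_inv [Finite P] {C : Fin (k + 1) → Subgroup P} (hC0 : C 0 = ⊥)
    (hmono : Monotone C) {β : MulAut P} (hβ : StabChain C β) :
    StabChain C β⁻¹ := by
  haveI : Finite (MulAut P) :=
    Finite.of_injective (fun e : MulAut P => (e : P → P)) DFunLike.coe_injective
  have hn : 0 < orderOf β := orderOf_pos β
  have hinv : β⁻¹ = β ^ (orderOf β - 1) := by
    apply inv_eq_of_mul_eq_one_right
    rw [← pow_succ']
    rw [Nat.sub_add_cancel hn]
    exact pow_orderOf_eq_one β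
  rw [hinv]
  exact stabChain_pow hC0 hmono hβ _

/-- A coprime-order automorphism stabilizing a chain (with p-group quotients) is trivial. -/
lemma stabChain_coprime_eq_one {p : ℕ} [Fact p.Prime] [Finite P] (hP : IsPGroup p P)
    {C : Fin (k + 1) → Subgroup P} (hC0 : C 0 = ⊥) (hCk : C (Fin.last k) = ⊤)
    {β : MulAut P} (hβ : StabChain C β) (hcop : Nat.Coprime (orderOf β) p) :
    β = 1 := by
  haveI : Finite (MulAut P) :=
    Finite.of_injective (fun e : MulAut P => (e : P → P)) DFunLike.coe_injective
  have key : ∀ j : ℕ, ∀ hj : j ≤ k, ∀ x ∈ C ⟨j, Nat.lt_succ_of_le hj⟩, β x = x := by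
    intro j
    induction j with
    | zero =>
      intro hj x hx
      have : (⟨0, Nat.lt_succ_of_le hj⟩ : Fin (k+1)) = 0 := rfl
      rw [this, hC0, Subgroup.mem_bot] at hx
      simp [hx]
    | succ m ih =>
      intro hj x hx
      have hm : m < k := hj
      set i : Fin k := ⟨m, hm⟩ with hi
      have hxi : x ∈ C i.succ := by
        convert hx using 2; rfl
      have hc : x⁻¹ * β x ∈ C i.castSucc := hβ i x hxi
      set c : P := x⁻¹ * β x with hcdef
      have hcC : c ∈ C ⟨m, Nat.lt_succ_of_le hm.le⟩ := by
        convert hc using 2; rfl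
      have hβc : β c = c := ih hm.le c hcC
      have hβx : β x = x * c := by rw [hcdef]; group
      have hpow : ∀ n : ℕ, (β ^ n) x = x * c ^ n := by
        intro n
        induction n with
        | zero => simp
        | succ l ihl =>
          rw [pow_succ', MulAut.mul_apply, ihl, map_mul, hβx, map_pow, hβc, pow_succ']
          group
      have hcn : c ^ orderOf β = 1 := by
        have := hpow (orderOf β)
        rw [pow_orderOf_eq_one β, MulAut.one_apply] at this
        have := this.symm
        rwa [mul_eq_left] at this
      obtain ⟨a, ha⟩ := hP c
      have h1 : orderOf c ∣ orderOf β := orderOf_dvd_of_pow_eq_one hcn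
      have h2 : orderOf c ∣ p ^ a := orderOf_dvd_of_pow_eq_one ha
      have hg : orderOf c ∣ Nat.gcd (orderOf β) (p ^ a) := Nat.dvd_gcd h1 h2
      have : Nat.gcd (orderOf β) (p ^ a) = 1 := hcop.pow_right a
      rw [this, Nat.dvd_one, orderOf_eq_one_iff] at hg
      rw [hβx, hg, mul_one]
  ext x
  have hx : x ∈ C (Fin.last k) := by rw [hCk]; trivial
  have := key k le_rfl x (by convert hx using 2; rfl)
  simpa using this

end Aux

/-- Let `P` be a finite `p`-group with a chain of subgroups
`1 = P₀ ≤ P₁ ≤ ⋯ ≤ P_k = P`, all normal in `P`, and let `Γ ≤ Aut(P)` normalize each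
`P_i`.  If `α ∈ Γ` satisfies `x⁻¹ • α(x) ∈ P_{i-1}` for all `1 ≤ i ≤ k` and `x ∈ P_i`,
then `α` belongs to `O_p(Γ)`;  equivalently (since `O_p(Γ)` is the largest normal
`p`-subgroup of `Γ`), `α` lies in some normal `p`-subgroup of `Γ`. -/
theorem mem_pCore_of_stabilizes_chain {p : ℕ} [Fact p.Prime]
    {P : Type*} [Group P] [Finite P] (hP : IsPGroup p P)
    {k : ℕ} (C : Fin (k + 1) → Subgroup P)
    (hC0 : C 0 = ⊥) (hCk : C (Fin.last k) = ⊤)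
    (hmono : Monotone C) (hnormal : ∀ i, (C i).Normal)
    (Γ : Subgroup (MulAut P))
    (hΓ : ∀ α ∈ Γ, ∀ i, (C i).map (α : MulAut P).toMonoidHom = C i)
    (α : MulAut P) (hα : α ∈ Γ)
    (hact : ∀ i : Fin k, ∀ x ∈ C i.succ, x⁻¹ * α x ∈ C i.castSucc) :
    ∃ N : Subgroup (MulAut P), N ≤ Γ ∧ IsPGroup p N ∧
      (∀ γ ∈ Γ, ∀ n ∈ N, γ * n * γ⁻¹ ∈ N) ∧ α ∈ N := by
  haveI : Finite (MulAut P) :=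
    Finite.of_injective (fun e : MulAut P => (e : P → P)) DFunLike.coe_injective
  -- the stabilizer of the chain, as a subgroup
  let S : Subgroup (MulAut P) :=
    { carrier := {β | StabChain C β}
      one_mem' := stabChain_one C
      mul_mem' := fun hβ hγ => stabChain_mul hC0 hmono hβ hγ
      inv_mem' := fun hβ => stabChain_inv hC0 hmono hβ }
  have hSmem : ∀ β : MulAut P, β ∈ S ↔ StabChain C β := fun β => Iff.rfl
  refine ⟨S ⊓ Γ, inf_le_right, ?_, ?_, ?_⟩
  · -- p-group
    intro g
    obtain ⟨β, hβ⟩ := g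
    have hβS : StabChain C β := hβ.1
    have hne : orderOf β ≠ 0 := (orderOf_pos β).ne'
    set v := (orderOf β).factorization p with hv
    refine ⟨v, ?_⟩
    have hdvd : p ^ v ∣ orderOf β := Nat.ordProj_dvd (orderOf β) p
    have hord : orderOf (β ^ p ^ v) = orderOf β / p ^ v := by
      rw [orderOf_pow' β (pow_ne_zero v (Fact.out : p.Prime).ne_zero),
        Nat.gcd_eq_right hdvd]
    have hcop : Nat.Coprime (orderOf (β ^ p ^ v)) p := by
      rw [hord]
      exact (Nat.coprime_ordCompl (Fact.out : p.Prime) hne).symm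
    have h1 : β ^ p ^ v = 1 :=
      stabChain_coprime_eq_one hP hC0 hCk (stabChain_pow hC0 hmono hβS _) hcop
    ext
    simp [h1]
  · -- normalized by Γ
    intro γ hγ n hn
    refine ⟨?_, mul_mem (mul_mem hγ hn.2) (Γ.inv_mem hγ)⟩
    intro i x hx
    -- pull x back along γ
    have hmap := hΓ γ hγ
    have hxpre : γ⁻¹ x ∈ C i.succ := by
      have : x ∈ (C i.succ).map (γ : MulAut P).toMonoidHom := by rw [hmap]; exact hx
      obtain ⟨z, hz, hzx⟩ := this
      have : γ⁻¹ x = z := by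
        simp only [MulEquiv.coe_toMonoidHom] at hzx
        rw [← hzx]; simp
      rw [this]; exact hz
    set y := γ⁻¹ x with hy
    have hxy : x = γ y := by simp [hy]
    have h1 : y⁻¹ * n y ∈ C i.castSucc := hn.1 i y hxpre
    have h2 : γ (y⁻¹ * n y) ∈ C i.castSucc := by
      rw [← hmap i.castSucc]
      exact ⟨_, h1, rfl⟩
    have : x⁻¹ * (γ * n * γ⁻¹) x = γ (y⁻¹ * n y) := by
      rw [hxy]
      simp [MulAut.mul_apply, map_mul]
    rw [this]
    exact h2
  · exact ⟨hact, hα⟩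
end

section
/- Let G be a finite group acting on a finite set {1,…,k}, let U be a Sylow p-subgroup of G, and let J ⊆ {1,…,k} be such that |Stab_U(σ·J)| ≤ |Stab_U(J)| for all σ ∈ G (where Stab_U(J) = {u ∈ U : u·J = J} for the induced action on subsets). Then Stab_U(J) is a Sylow p-subgroup of Stab_G(J). -/
open Pointwise

/-- Let `G` be a finite group acting on `{1,…,k}`, `U` a Sylow
`p`-subgroup of `G`, and `J ⊆ {1,…,k}` such that `|Stab_U(σ•J)| ≤ |Stab_U(J)|` for
all `σ ∈ G`.  Then `Stab_U(J)` is a Sylow `p`-subgroup of `Stab_G(J)`. -/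
theorem stabilizer_sylow_of_maximal {p : ℕ} [Fact p.Prime]
    {G : Type*} [Group G] [Finite G] {k : ℕ} [MulAction G (Fin k)]
    (U : Sylow p G) (J : Set (Fin k))
    (hmax : ∀ σ : G,
      Nat.card ↥((U : Subgroup G) ⊓ MulAction.stabilizer G (σ • J)) ≤
        Nat.card ↥((U : Subgroup G) ⊓ MulAction.stabilizer G J)) :
    ((U : Subgroup G) ⊓ MulAction.stabilizer G J ≤ MulAction.stabilizer G J) ∧
    IsPGroup p ↥((U : Subgroup G) ⊓ MulAction.stabilizer G J) ∧
    ∀ R : Subgroup G, R ≤ MulAction.stabilizer G J → IsPGroup p R →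
      (U : Subgroup G) ⊓ MulAction.stabilizer G J ≤ R →
      R = (U : Subgroup G) ⊓ MulAction.stabilizer G J := by
  refine ⟨inf_le_right, U.2.to_inf_left, ?_⟩
  intro R hRS hRp hle
  obtain ⟨Q, hRQ⟩ := hRp.exists_le_sylow
  obtain ⟨g, hg⟩ := MulAction.exists_smul_eq G Q U
  have hQ : (Q : Subgroup G) = MulAut.conj g⁻¹ • (U : Subgroup G) := by
    rw [← hg, Sylow.coe_subgroup_smul, map_inv, inv_smul_smul]
  have hkey : MulAut.conj g⁻¹ • (U : Subgroup G) ⊓ MulAction.stabilizer G J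
      = MulAut.conj g⁻¹ • ((U : Subgroup G) ⊓ MulAction.stabilizer G (g • J)) := by
    ext x
    simp only [Subgroup.mem_inf, Subgroup.mem_pointwise_smul_iff_inv_smul_mem,
      MulAction.mem_stabilizer_iff]
    constructor
    · rintro ⟨h1, h2⟩
      refine ⟨h1, ?_⟩
      have : (MulAut.conj g⁻¹)⁻¹ • x = g * x * g⁻¹ := by
        simp [MulAut.smul_def]
      rw [this, mul_smul, mul_smul, inv_smul_smul, h2]
    · rintro ⟨h1, h2⟩
      refine ⟨h1, ?_⟩
      have hx : (MulAut.conj g⁻¹)⁻¹ • x = g * x * g⁻¹ := by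
        simp [MulAut.smul_def]
      rw [hx, mul_smul, mul_smul] at h2
      have := smul_left_cancel g h2
      rwa [inv_smul_smul] at this
  have hcard1 : Nat.card ↥((Q : Subgroup G) ⊓ MulAction.stabilizer G J)
      ≤ Nat.card ↥((U : Subgroup G) ⊓ MulAction.stabilizer G J) := by
    rw [hQ, hkey]
    calc Nat.card ↥(MulAut.conj g⁻¹ • ((U : Subgroup G) ⊓ MulAction.stabilizer G (g • J)))
        = Nat.card ↥((U : Subgroup G) ⊓ MulAction.stabilizer G (g • J)) :=
          (Nat.card_congr (Subgroup.equivSMul (MulAut.conj g⁻¹) _).toEquiv).symm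
      _ ≤ _ := hmax g
  have hRle : R ≤ (Q : Subgroup G) ⊓ MulAction.stabilizer G J := le_inf hRQ hRS
  have hcard2 : Nat.card ↥R ≤ Nat.card ↥((U : Subgroup G) ⊓ MulAction.stabilizer G J) :=
    le_trans (Subgroup.card_le_of_le hRle) hcard1
  exact (Subgroup.eq_of_le_of_card_ge hle hcard2).symm
end

section
/- Let S be a finite p-group and T₁, …, T_k ≤ S pairwise elementwise-commuting subgroups with product T = T₁⋯T_k, and suppose Z ≤ Z(T) is such that T/Z = ∏(T_iZ/Z) is an internal direct product with each factor nontrivial. Let Y ≤ T with Y ≥ Z and Y/Z = Z(T/Z). Then Y ∩ T_i is not contained in Z for each i, and for every P ≤ T with Y ≰ P, there exists x ∈ N_Y(P) \ P such that [x, P] ≤ Z ∩ P and [x, Z ∩ P] = 1. -/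
open Subgroup

private lemma sup_decomp {S : Type*} [Group S] {A B : Subgroup S}
    (h : ∀ b ∈ B, ∀ a ∈ A, b * a * b⁻¹ ∈ A) {x : S} (hx : x ∈ A ⊔ B) :
    ∃ a ∈ A, ∃ b ∈ B, x = a * b := by
  let K : Subgroup S :=
    { carrier := {x | ∃ a ∈ A, ∃ b ∈ B, x = a * b}
      one_mem' := ⟨1, one_mem A, 1, one_mem B, (one_mul 1).symm⟩
      mul_mem' := by
        rintro x y ⟨a1, ha1, b1, hb1, rfl⟩ ⟨a2, ha2, b2, hb2, rfl⟩
        exact ⟨a1 * (b1 * a2 * b1⁻¹), mul_mem ha1 (h b1 hb1 a2 ha2),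
          b1 * b2, mul_mem hb1 hb2, by group⟩
      inv_mem' := by
        rintro x ⟨a, ha, b, hb, rfl⟩
        refine ⟨b⁻¹ * a⁻¹ * b, ?_, b⁻¹, inv_mem hb, by group⟩
        simpa using h _ (inv_mem hb) _ (inv_mem ha) }
  have hA : A ≤ K := fun a ha => ⟨a, ha, 1, one_mem B, (mul_one a).symm⟩
  have hB : B ≤ K := fun b hb => ⟨1, one_mem A, b, hb, (one_mul b).symm⟩
  exact sup_le hA hB hx

/-- Let `T₁,…,T_k` be pairwise elementwise-commuting subgroups of a
finite `p`-group `S` with product `T`, and let `Z ≤ Z(T)` be such that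
`T/Z = ∏ (T_iZ/Z)` is an internal direct product (expressed by the membership
characterization of products in `Z`) with each factor nontrivial (`T_i ≰ Z`).
Let `Y ≤ T` contain `Z` with `Y/Z = Z(T/Z)`.  Then `Y ∩ T_i ≰ Z` for each `i`,
and for every `P ≤ T` with `Y ≰ P` there is `x ∈ N_Y(P) \ P` with
`[x,P] ≤ Z ∩ P` and `[x, Z ∩ P] = 1`. -/
theorem center_preimage_properties {p : ℕ} [Fact p.Prime]
    {S : Type*} [Group S] [Finite S] (hS : IsPGroup p S)
    {k : ℕ} (T : Fin k → Subgroup S)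
    (hcomm : Pairwise fun i j : Fin k => ∀ x y : S, x ∈ T i → y ∈ T j → Commute x y)
    (TT : Subgroup S) (hTT : TT = ⨆ i, T i)
    (Z : Subgroup S) (hZT : Z ≤ TT)
    (hZcentral : ∀ z ∈ Z, ∀ t ∈ TT, Commute z t)
    (hker : ∀ t : Fin k → S, (∀ i, t i ∈ T i) →
      ((List.ofFn t).prod ∈ Z ↔ ∀ i, t i ∈ Z ⊓ T i))
    (hnontriv : ∀ i, ¬ T i ≤ Z)
    (Y : Subgroup S) (hYT : Y ≤ TT) (hZY : Z ≤ Y)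
    (hY : ∀ y : S, y ∈ Y ↔ y ∈ TT ∧ ∀ t ∈ TT, y * t * y⁻¹ * t⁻¹ ∈ Z) :
    (∀ i, ¬ Y ⊓ T i ≤ Z) ∧
    ∀ P : Subgroup S, P ≤ TT → ¬ Y ≤ P →
      ∃ x, x ∈ Y ∧ x ∈ Subgroup.normalizer (P : Set S) ∧ x ∉ P ∧
        (∀ g ∈ P, x * g * x⁻¹ * g⁻¹ ∈ Z ⊓ P) ∧
        ∀ z ∈ Z ⊓ P, Commute x z := by
  have hTiTT : ∀ i, T i ≤ TT := fun i => hTT ▸ le_iSup T i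
  constructor
  · -- Part 1
    intro i hle
    have hconj : ∀ g ∈ TT, ∀ u ∈ T i, ∃ v ∈ T i, ∃ z ∈ Z, g * u * g⁻¹ = z * v := by
      intro g hg
      rw [hTT] at hg
      refine (Subgroup.iSup_induction T
        (C := fun g => g ∈ TT ∧ ∀ u ∈ T i, ∃ v ∈ T i, ∃ z ∈ Z, g * u * g⁻¹ = z * v)
        hg ?_ ?_ ?_).2
      · intro j x hx
        refine ⟨hTiTT j hx, fun u hu => ?_⟩
        by_cases hji : j = i
        · subst hji
          exact ⟨x * u * x⁻¹, mul_mem (mul_mem hx hu) (inv_mem hx), 1, one_mem Z, by group⟩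
        · have hc : x * u = u * x := hcomm hji x u hx hu
          refine ⟨u, hu, 1, one_mem Z, ?_⟩
          rw [hc]; group
      · exact ⟨one_mem TT, fun u hu => ⟨u, hu, 1, one_mem Z, by group⟩⟩
      · rintro a b ⟨haT, ha⟩ ⟨hbT, hb⟩
        refine ⟨mul_mem haT hbT, fun u hu => ?_⟩
        obtain ⟨v1, hv1, z1, hz1, e1⟩ := hb u hu
        obtain ⟨v2, hv2, z2, hz2, e2⟩ := ha v1 hv1
        refine ⟨v2, hv2, z1 * z2, mul_mem hz1 hz2, ?_⟩
        have hcz : z1 * a = a * z1 := hZcentral z1 hz1 a haT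
        calc a * b * u * (a * b)⁻¹ = a * (b * u * b⁻¹) * a⁻¹ := by group
          _ = a * (z1 * v1) * a⁻¹ := by rw [e1]
          _ = (a * z1 * a⁻¹) * (a * v1 * a⁻¹) := by group
          _ = z1 * (a * v1 * a⁻¹) := by rw [← hcz]; group
          _ = z1 * (z2 * v2) := by rw [e2]
          _ = z1 * z2 * v2 := by group
    haveI hZ' : (Z.subgroupOf TT).Normal := by
      constructor
      rintro n hn g
      rw [mem_subgroupOf] at hn ⊢
      have hc : (n : S) * g = g * n := hZcentral _ hn _ g.2
      have he : ((g * n * g⁻¹ : TT) : S) = (n : S) := by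
        push_cast
        rw [← hc]; group
      rw [he]; exact hn
    have hQ : IsPGroup p (TT ⧸ Z.subgroupOf TT) := (hS.to_subgroup TT).to_quotient _
    set N : Subgroup (TT ⧸ Z.subgroupOf TT) :=
      ((T i).subgroupOf TT).map (QuotientGroup.mk' (Z.subgroupOf TT)) with hN
    haveI hNnormal : N.Normal := by
      constructor
      rintro n hn g
      obtain ⟨u, hu, rfl⟩ := hn
      simp only [SetLike.mem_coe, mem_subgroupOf] at hu
      induction g using QuotientGroup.induction_on with
      | H w =>
        obtain ⟨v, hv, z, hz, e⟩ := hconj w w.2 u hu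
        refine ⟨⟨v, hTiTT i hv⟩, mem_subgroupOf.2 hv, ?_⟩
        show QuotientGroup.mk _ =
          (QuotientGroup.mk w) * (QuotientGroup.mk u) * (QuotientGroup.mk w)⁻¹
        rw [← QuotientGroup.mk_inv, ← QuotientGroup.mk_mul, ← QuotientGroup.mk_mul]
        refine (QuotientGroup.eq.2 ?_).symm
        rw [mem_subgroupOf]
        have hcz : z * v = v * z := hZcentral z hz v (hTiTT i hv)
        show ((w * u * w⁻¹ : TT) : S)⁻¹ * v ∈ Z
        push_cast
        rw [e]
        have hq : (z * v)⁻¹ * v = z⁻¹ := by rw [hcz]; group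
        rw [hq]
        exact inv_mem hz
    obtain ⟨t, ht, htZ⟩ := SetLike.not_le_iff_exists.1 (hnontriv i)
    have htTT : t ∈ TT := hTiTT i ht
    have hNnontriv : Nontrivial N := by
      refine ⟨⟨⟨QuotientGroup.mk (⟨t, htTT⟩ : TT),
        ⟨⟨t, htTT⟩, mem_subgroupOf.2 ht, rfl⟩⟩, 1, ?_⟩⟩
      intro hc
      apply htZ
      have : (QuotientGroup.mk (⟨t, htTT⟩ : TT) : TT ⧸ Z.subgroupOf TT) = 1 :=
        Subtype.ext_iff.mp hc
      exact mem_subgroupOf.1 ((QuotientGroup.eq_one_iff _).1 this)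
    have hNp : IsPGroup p N := hQ.to_subgroup N
    have hpN : p ∣ Nat.card N := by
      obtain ⟨n, hn, hcard⟩ := hNp.nontrivial_iff_card.1 hNnontriv
      rw [hcard]; exact dvd_pow_self p hn.ne'
    have hCQ : IsPGroup p (ConjAct (TT ⧸ Z.subgroupOf TT)) := hQ.of_equiv ConjAct.toConjAct
    have h1fix : (1 : N) ∈ MulAction.fixedPoints (ConjAct (TT ⧸ Z.subgroupOf TT)) N :=
      fun g => smul_one g
    obtain ⟨b, hbfix, hb1⟩ := hCQ.exists_fixed_point_of_prime_dvd_card_of_fixed_point (↥N) hpN h1fix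
    have hbcen : ∀ g : TT ⧸ Z.subgroupOf TT, g * (b : TT ⧸ Z.subgroupOf TT) * g⁻¹ = b := by
      intro g
      have := hbfix (ConjAct.toConjAct g)
      have hval := congrArg Subtype.val this
      rwa [ConjAct.Subgroup.val_conj_smul, ConjAct.smul_def, ConjAct.ofConjAct_toConjAct] at hval
    obtain ⟨u, hu, hmk⟩ := b.2
    simp only [SetLike.mem_coe, mem_subgroupOf] at hu
    have huY : (u : S) ∈ Y := by
      rw [hY]
      refine ⟨u.2, fun s hs => ?_⟩
      have hcen := hbcen (QuotientGroup.mk (⟨s, hs⟩ : TT))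
      rw [← hmk] at hcen
      have : (QuotientGroup.mk ((⟨s, hs⟩ : TT) * u * (⟨s, hs⟩ : TT)⁻¹) :
          TT ⧸ Z.subgroupOf TT) = QuotientGroup.mk u := by
        rw [QuotientGroup.mk_mul, QuotientGroup.mk_mul, QuotientGroup.mk_inv]
        exact_mod_cast hcen
      have hw := mem_subgroupOf.1 (QuotientGroup.eq.1 this)
      have hwval : s * (u : S)⁻¹ * s⁻¹ * u ∈ Z := by
        have : (((⟨s, hs⟩ : TT) * u * (⟨s, hs⟩ : TT)⁻¹)⁻¹ * u : TT).val
            = s * (u : S)⁻¹ * s⁻¹ * u := by push_cast; group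
        rwa [this] at hw
      have hD : (u : S) * s * (u : S)⁻¹ * s⁻¹
          = (u : S) * (s * (u : S)⁻¹ * s⁻¹ * u) * (u : S)⁻¹ := by group
      rw [hD]
      have hcw : (s * (u : S)⁻¹ * s⁻¹ * u) * u = u * (s * (u : S)⁻¹ * s⁻¹ * u) :=
        hZcentral _ hwval _ u.2
      have : (u : S) * (s * (u : S)⁻¹ * s⁻¹ * u) * (u : S)⁻¹
          = s * (u : S)⁻¹ * s⁻¹ * u := by rw [← hcw]; group
      rw [this]
      exact hwval
    have huZ : (u : S) ∉ Z := by
      intro huz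
      apply hb1.symm
      have : (b : TT ⧸ Z.subgroupOf TT) = 1 := by
        rw [← hmk]
        exact (QuotientGroup.eq_one_iff _).2 (mem_subgroupOf.2 huz)
      exact Subtype.ext this
    exact huZ (hle ⟨huY, hu⟩)
  · -- Part 2
    intro P hPT hYP
    have hnorm : ∀ t ∈ TT, ∀ y ∈ Y, t * y * t⁻¹ ∈ Y := by
      intro t ht y hy
      have hc : y * t * y⁻¹ * t⁻¹ ∈ Z := ((hY y).1 hy).2 t ht
      have he : t * y * t⁻¹ = (y * t * y⁻¹ * t⁻¹)⁻¹ * y := by group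
      rw [he]
      exact mul_mem (hZY (inv_mem hc)) hy
    have hPH : P ≤ Y ⊔ P := le_sup_right
    have hP'ne : P.subgroupOf (Y ⊔ P) ≠ ⊤ := by
      obtain ⟨y, hy, hyP⟩ := SetLike.not_le_iff_exists.1 hYP
      intro htop
      have : (⟨y, le_sup_left (b := P) hy⟩ : (Y ⊔ P : Subgroup S)) ∈ P.subgroupOf (Y ⊔ P) :=
        htop ▸ mem_top _
      exact hyP (mem_subgroupOf.1 this)
    have hHp : IsPGroup p (Y ⊔ P : Subgroup S) := hS.to_subgroup _
    haveI : Group.IsNilpotent (Y ⊔ P : Subgroup S) := hHp.isNilpotent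
    have hnc := normalizerCondition_of_isNilpotent (G := (Y ⊔ P : Subgroup S))
    obtain ⟨x', hx'norm, hx'P⟩ :=
      SetLike.exists_of_lt (hnc (P.subgroupOf (Y ⊔ P)) (lt_top_iff_ne_top.2 hP'ne))
    have hx'n : ∀ h : S, h ∈ P ↔ (x' : S) * h * (x' : S)⁻¹ ∈ P := by
      intro h
      constructor
      · intro hh
        exact mem_subgroupOf.1
          ((Subgroup.mem_normalizer_iff.1 hx'norm ⟨h, hPH hh⟩).1 (mem_subgroupOf.2 hh))
      · intro hh
        have hhH : h ∈ Y ⊔ P := by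
          have hx'mem : (x' : S) ∈ Y ⊔ P := x'.2
          have he : h = (x' : S)⁻¹ * ((x' : S) * h * (x' : S)⁻¹) * (x' : S) := by group
          rw [he]
          exact mul_mem (mul_mem (inv_mem hx'mem) (hPH hh)) hx'mem
        exact mem_subgroupOf.1
          ((Subgroup.mem_normalizer_iff.1 hx'norm ⟨h, hhH⟩).2 (mem_subgroupOf.2 hh))
    obtain ⟨y, hy, q, hq, he⟩ :=
      sup_decomp (fun b hb a ha => hnorm b (hPT hb) a ha) x'.2
    have hynorm : y ∈ Subgroup.normalizer (P : Set S) := by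
      have h1 : (x' : S) ∈ Subgroup.normalizer (P : Set S) := Subgroup.mem_normalizer_iff.2 hx'n
      have h2 : q⁻¹ ∈ Subgroup.normalizer (P : Set S) := le_normalizer (inv_mem hq)
      have hyq : y = (x' : S) * q⁻¹ := by rw [he]; group
      rw [hyq]; exact mul_mem h1 h2
    have hyP : y ∉ P := by
      intro hyp
      apply hx'P
      rw [mem_subgroupOf]
      show (x' : S) ∈ P
      rw [he]; exact mul_mem hyp hq
    refine ⟨y, hy, hynorm, hyP, fun g hg => ?_, ?_⟩
    · rw [mem_inf]
      refine ⟨((hY y).1 hy).2 g (hPT hg), ?_⟩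
      have h1 : y * g * y⁻¹ ∈ P := (Subgroup.mem_normalizer_iff.1 hynorm g).1 hg
      have h2 : g⁻¹ ∈ P := inv_mem hg
      exact mul_mem h1 h2
    · rintro z ⟨hz1, _⟩
      exact (hZcentral z hz1 y (hYT hy)).symm
end
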